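/- Let B = [b_{i₁,…,i_d}] ∈ ℝ₊^{m₁×⋯×m_d} (d ≥ 2, each m_j ≥ 2) be a nonnegative tensor with no zero slice, and let s_k ∈ ℝ^{m_k}, k ∈ [d], be positive vectors satisfying the compatibility condition. Then there exists a nonnegative tensor A ∈ ℝ₊^{m₁×⋯×m_d} that is positively diagonally equivalent to B and has every (k,i_k)-slice sum equal to s_{k,i_k}, if and only if: for all x_k = (x_{k,1},…,x_{k,m_k}) ∈ ℝ^{m_k}, k ∈ [d], satisfying x_{1,i₁} + ⋯ + x_{d,i_d} ≤ 0 whenever b_{i₁,…,i_d} > 0 and s_kᵀx_k = 0 for all k ∈ [d], one has x_{1,i₁} + ⋯ + x_{d,i_d} = 0 whenever b_{i₁,…,i_d} > 0. -/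

import Mathlib

open Finset Filter Real

private lemma aux_hasDerivAt {ι : Type*} [Fintype ι] (b a c : ι → ℝ) (p q : ℝ) :
    HasDerivAt (fun t : ℝ => (∑ i, b i * Real.exp (a i + t * c i)) - (p + t * q))
      ((∑ i, b i * Real.exp (a i) * c i) - q) 0 := by
  have h1 : ∀ i : ι, HasDerivAt (fun t : ℝ => b i * Real.exp (a i + t * c i))
      (b i * Real.exp (a i) * c i) 0 := by
    intro i
    have h : HasDerivAt (fun t : ℝ => a i + t * c i) (c i) 0 :=
      (hasDerivAt_mul_const (c i)).const_add (a i)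
    have h2 := h.exp.const_mul (b i)
    rw [show b i * Real.exp (a i) * c i = b i * (Real.exp (a i + 0 * c i) * c i) by
      simp [mul_assoc]]
    exact h2
  have h2 : HasDerivAt (fun t : ℝ => p + t * q) q 0 :=
    (hasDerivAt_mul_const q).const_add p
  exact (HasDerivAt.fun_sum (fun i _ => h1 i)).sub h2

private lemma aux_exists_R (b ε C M : ℝ) (hb : 0 < b) (hε : 0 < ε) :
    ∃ R : ℝ, 0 < R ∧ ∀ t : ℝ, R ≤ t → M < b * Real.exp (ε * t) - C * t ∧ M < ε * t := by
  have h0 : Tendsto (fun t : ℝ => ε * t) atTop atTop :=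
    Tendsto.const_mul_atTop hε tendsto_id
  have h1 : Tendsto (fun t : ℝ => (ε * t) ^ 1 * Real.exp (-(ε * t))) atTop (nhds 0) :=
    (tendsto_pow_mul_exp_neg_atTop_nhds_zero 1).comp h0
  have h2 : Tendsto (fun t : ℝ => b - C * (ε⁻¹ * ((ε * t) ^ 1 * Real.exp (-(ε * t)))))
      atTop (nhds b) := by
    have h := tendsto_const_nhds (α := ℝ) (x := b) (f := atTop) |>.sub
      ((tendsto_const_nhds (x := C) (f := atTop)).mul
        ((tendsto_const_nhds (x := ε⁻¹) (f := atTop)).mul h1))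
    simpa using h
  have h3 : Tendsto (fun t : ℝ => Real.exp (ε * t)) atTop atTop :=
    Real.tendsto_exp_atTop.comp h0
  have h4 : Tendsto (fun t : ℝ => Real.exp (ε * t) *
      (b - C * (ε⁻¹ * ((ε * t) ^ 1 * Real.exp (-(ε * t)))))) atTop atTop :=
    h3.atTop_mul_pos hb h2
  have h5 : Tendsto (fun t : ℝ => b * Real.exp (ε * t) - C * t) atTop atTop := by
    refine h4.congr fun t => ?_
    rw [pow_one, Real.exp_neg]
    have hexp : Real.exp (ε * t) ≠ 0 := (Real.exp_pos _).ne'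
    field_simp
  have h6 : ∀ᶠ t : ℝ in atTop, M < b * Real.exp (ε * t) - C * t ∧ M < ε * t :=
    (h5.eventually_gt_atTop M).and (h0.eventually_gt_atTop M)
  obtain ⟨R₀, hR₀⟩ := eventually_atTop.1 h6
  exact ⟨max R₀ 1, lt_of_lt_of_le one_pos (le_max_right _ _),
    fun t ht => hR₀ t (le_trans (le_max_left _ _) ht)⟩

private lemma aux_sum_mul {d : ℕ} {m : Fin d → ℕ} (A : ((j : Fin d) → Fin (m j)) → ℝ)
    (x : (k : Fin d) → Fin (m k) → ℝ) :
    ∑ i, A i * (∑ k, x k (i k)) =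
      ∑ k, ∑ j, (∑ i ∈ Finset.univ.filter (fun i => i k = j), A i) * x k j := by
  classical
  calc ∑ i, A i * (∑ k, x k (i k)) = ∑ i, ∑ k, A i * x k (i k) := by
        simp [Finset.mul_sum]
    _ = ∑ k, ∑ i, A i * x k (i k) := Finset.sum_comm
    _ = ∑ k, ∑ j, ∑ i ∈ Finset.univ.filter (fun i => i k = j), A i * x k (i k) := by
        refine Finset.sum_congr rfl fun k _ => ?_
        rw [Finset.sum_fiberwise_eq_sum_filter Finset.univ Finset.univ (fun i => i k)
          (fun i => A i * x k (i k))]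
        simp
    _ = ∑ k, ∑ j, (∑ i ∈ Finset.univ.filter (fun i => i k = j), A i) * x k j := by
        refine Finset.sum_congr rfl fun k _ => Finset.sum_congr rfl fun j _ => ?_
        rw [Finset.sum_mul]
        refine Finset.sum_congr rfl fun i hi => ?_
        rw [(Finset.mem_filter.1 hi).2]

set_option maxHeartbeats 2000000 in


/-- Theorem 3.1 of the paper. A nonnegative tensor `B` with no zero
slice can be scaled (by positive diagonal equivalence) to have prescribed positive slice
sums `s k` (satisfying the compatibility condition) if and only if every solution of the
linear system `∑_k x_k(i_k) ≤ 0` on the support of `B` with `sₖᵀxₖ = 0` satisfies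
`∑_k x_k(i_k) = 0` on the support of `B`. -/
theorem tensor_scaling_iff_linear_condition {d : ℕ} (hd : 2 ≤ d) {m : Fin d → ℕ}
    (hm : ∀ j, 2 ≤ m j)
    (B : ((j : Fin d) → Fin (m j)) → ℝ)
    (hB : ∀ i, 0 ≤ B i)
    (hslice : ∀ (k : Fin d) (ik : Fin (m k)),
      ∃ i : (j : Fin d) → Fin (m j), i k = ik ∧ B i ≠ 0)
    (s : (k : Fin d) → Fin (m k) → ℝ) (hs : ∀ k i, 0 < s k i)
    (hcompat : ∀ k l : Fin d, ∑ i, s k i = ∑ i, s l i) :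
    (∃ A : ((j : Fin d) → Fin (m j)) → ℝ, (∀ i, 0 ≤ A i) ∧
      (∃ x : (k : Fin d) → Fin (m k) → ℝ, ∀ i, A i = Real.exp (∑ k, x k (i k)) * B i) ∧
      (∀ (k : Fin d) (ik : Fin (m k)),
        ∑ i ∈ Finset.univ.filter (fun i : (j : Fin d) → Fin (m j) => i k = ik), A i
          = s k ik)) ↔
    (∀ x : (k : Fin d) → Fin (m k) → ℝ,
      (∀ i : (j : Fin d) → Fin (m j), 0 < B i → ∑ k, x k (i k) ≤ 0) →
      (∀ k, ∑ i, s k i * x k i = 0) →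
      ∀ i : (j : Fin d) → Fin (m j), 0 < B i → ∑ k, x k (i k) = 0) := by
  classical
  constructor
  · rintro ⟨A, hA0, ⟨x₀, hAx⟩, hAs⟩ x hxle hxs i₀ hBi₀
    have key : ∑ i, A i * (∑ k, x k (i k)) = 0 := by
      rw [aux_sum_mul]
      have h : ∀ k : Fin d, ∑ j, (∑ i ∈ Finset.univ.filter
          (fun i : (j : Fin d) → Fin (m j) => i k = j), A i) * x k j = 0 := by
        intro k
        calc ∑ j, (∑ i ∈ Finset.univ.filter (fun i : (j : Fin d) → Fin (m j) => i k = j), A i)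
              * x k j = ∑ j, s k j * x k j :=
              Finset.sum_congr rfl fun j _ => by rw [hAs k j]
          _ = 0 := hxs k
      simp [h]
    have hnonpos : ∀ i ∈ Finset.univ, A i * (∑ k, x k (i k)) ≤ 0 := by
      intro i _
      by_cases hBi : 0 < B i
      · exact mul_nonpos_iff.2 (Or.inl ⟨hA0 i, hxle i hBi⟩)
      · have hB0 : B i = 0 := le_antisymm (not_lt.1 hBi) (hB i)
        rw [hAx i, hB0, mul_zero, zero_mul]
    have hz := (Finset.sum_eq_zero_iff_of_nonpos hnonpos).1 key i₀ (Finset.mem_univ _)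
    have hApos : 0 < A i₀ := by rw [hAx i₀]; exact mul_pos (Real.exp_pos _) hBi₀
    rcases mul_eq_zero.1 hz with h | h
    · exact absurd h hApos.ne'
    · exact h

  · intro H
    have hd0 : 0 < d := by omega
    haveI hne : ∀ k : Fin d, Nonempty (Fin (m k)) := fun k => ⟨⟨0, by have := hm k; omega⟩⟩
    set k₀ : Fin d := ⟨0, hd0⟩ with hk₀
    set τ : ℝ := ∑ j, s k₀ j with hτdef
    have hτ : 0 < τ := Finset.sum_pos (fun j _ => hs k₀ j) Finset.univ_nonempty
    have htau : ∀ k : Fin d, ∑ j, s k j = τ := fun k => hcompat k k₀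
    set supp : Finset ((j : Fin d) → Fin (m j)) :=
      Finset.univ.filter (fun i => 0 < B i) with hsuppdef
    have hsupp_ne : supp.Nonempty := by
      obtain ⟨i, -, hi⟩ := hslice k₀ ⟨0, by have := hm k₀; omega⟩
      exact ⟨i, Finset.mem_filter.2 ⟨Finset.mem_univ _, (hB i).lt_of_ne (Ne.symm hi)⟩⟩
    set Lf : ((k : Fin d) → Fin (m k) → ℝ) → ℝ :=
      fun x => ∑ k, ∑ j, s k j * x k j with hLf
    set φ : ((k : Fin d) → Fin (m k) → ℝ) → ℝ :=
      fun x => (∑ i, B i * Real.exp (∑ k, x k (i k))) - Lf x with hφ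
    -- the invariance subspace
    obtain ⟨U, hU⟩ : ∃ U : Submodule ℝ ((k : Fin d) → Fin (m k) → ℝ),
        ∀ u, u ∈ U ↔ ((∀ i, 0 < B i → ∑ k, u k (i k) = 0) ∧ Lf u = 0) := by
      refine ⟨{ carrier := {u | (∀ i, 0 < B i → ∑ k, u k (i k) = 0) ∧ Lf u = 0}
                add_mem' := ?_, zero_mem' := ?_, smul_mem' := ?_ }, fun u => Iff.rfl⟩
      · rintro u v ⟨hu1, hu2⟩ ⟨hv1, hv2⟩
        refine ⟨fun i hi => ?_, ?_⟩
        · simp only [Pi.add_apply]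
          rw [Finset.sum_add_distrib, hu1 i hi, hv1 i hi, add_zero]
        · simp only [hLf, Pi.add_apply, mul_add, Finset.sum_add_distrib] at *
          rw [hu2, hv2, add_zero]
      · exact ⟨fun i _ => by simp, by simp [hLf]⟩
      · rintro c u ⟨hu1, hu2⟩
        refine ⟨fun i hi => ?_, ?_⟩
        · simp only [Pi.smul_apply, smul_eq_mul, ← Finset.mul_sum, hu1 i hi, mul_zero]
        · simp only [hLf, Pi.smul_apply, smul_eq_mul] at *
          calc ∑ k, ∑ j, s k j * (c * u k j) = c * ∑ k, ∑ j, s k j * u k j := by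
                rw [Finset.mul_sum]
                exact Finset.sum_congr rfl fun k _ => by
                  rw [Finset.mul_sum]
                  exact Finset.sum_congr rfl fun j _ => by ring
            _ = 0 := by rw [hu2, mul_zero]
    -- invariance of φ
    have hinv : ∀ u ∈ U, ∀ x, φ (x + u) = φ x := by
      intro u hu x
      obtain ⟨hu1, hu2⟩ := (hU u).1 hu
      have e1 : ∑ i, B i * Real.exp (∑ k, (x + u) k (i k))
          = ∑ i, B i * Real.exp (∑ k, x k (i k)) := by
        refine Finset.sum_congr rfl fun i _ => ?_
        by_cases hBi : 0 < B i
        · have e : ∑ k, (x + u) k (i k) = ∑ k, x k (i k) := by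
            simp only [Pi.add_apply]
            rw [Finset.sum_add_distrib, hu1 i hBi, add_zero]
          rw [e]
        · have : B i = 0 := le_antisymm (not_lt.1 hBi) (hB i)
          simp [this]
      have e2 : Lf (x + u) = Lf x := by
        simp only [hLf, Pi.add_apply, mul_add, Finset.sum_add_distrib]
        simp only [hLf] at hu2
        rw [hu2, add_zero]
      simp only [hφ, e1, e2]
    -- the key membership lemma using H
    have hUmem : ∀ w : (k : Fin d) → Fin (m k) → ℝ,
        (∀ i, 0 < B i → ∑ k, w k (i k) ≤ 0) → 0 ≤ Lf w → w ∈ U := by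
      intro w hw1 hw2
      set v : (k : Fin d) → Fin (m k) → ℝ :=
        fun k j => w k j - (∑ j', s k j' * w k j') / τ with hv
      have hvs : ∀ k, ∑ j, s k j * v k j = 0 := by
        intro k
        simp only [hv, mul_sub, Finset.sum_sub_distrib]
        rw [← Finset.sum_mul, htau k]
        field_simp
        ring
      have hvsum : ∀ i : (j : Fin d) → Fin (m j),
          ∑ k, v k (i k) = (∑ k, w k (i k)) - Lf w / τ := by
        intro i
        simp only [hv, Finset.sum_sub_distrib]
        congr 1
        rw [hLf, ← Finset.sum_div]
      have hvle : ∀ i : (j : Fin d) → Fin (m j), 0 < B i → ∑ k, v k (i k) ≤ 0 := by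
        intro i hi
        rw [hvsum]
        have h1 := hw1 i hi
        have h2 : 0 ≤ Lf w / τ := div_nonneg hw2 hτ.le
        linarith
      have hveq := H v hvle hvs
      obtain ⟨i₀, hi₀⟩ := hsupp_ne
      have hBi₀ : 0 < B i₀ := (Finset.mem_filter.1 hi₀).2
      have h1 : (∑ k, w k (i₀ k)) - Lf w / τ = 0 := by rw [← hvsum]; exact hveq i₀ hBi₀
      have hL0 : Lf w = 0 := by
        have hle := hw1 i₀ hBi₀
        have h2 : 0 ≤ Lf w / τ := div_nonneg hw2 hτ.le
        have h3 : Lf w / τ = 0 := by linarith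
        field_simp at h3
        simpa using h3
      refine (hU w).2 ⟨fun i hBi => ?_, hL0⟩
      have h4 := hveq i hBi
      rw [hvsum, hL0] at h4
      simpa using h4
    -- complement subspace
    obtain ⟨W, hUW⟩ := Submodule.exists_isCompl U
    have hWclosed : IsClosed (W : Set ((k : Fin d) → Fin (m k) → ℝ)) :=
      Submodule.closed_of_finiteDimensional W
    -- continuity of φ
    have hcsum : ∀ i : (j : Fin d) → Fin (m j),
        Continuous (fun x : (k : Fin d) → Fin (m k) → ℝ => ∑ k, x k (i k)) := by
      intro i
      exact continuous_finset_sum _ fun k _ => (continuous_apply (i k)).comp (continuous_apply k)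
    have hLcont : Continuous Lf := by
      rw [hLf]
      exact continuous_finset_sum _ fun k _ => continuous_finset_sum _ fun j _ =>
        continuous_const.mul ((continuous_apply j).comp (continuous_apply k))
    have hφcont : Continuous φ := by
      rw [hφ]
      exact Continuous.sub (continuous_finset_sum _ fun i _ =>
        continuous_const.mul (Real.continuous_exp.comp (hcsum i))) hLcont
    -- the gauge function g
    set g : ((k : Fin d) → Fin (m k) → ℝ) → ℝ :=
      fun w => (∑ i ∈ supp, max (∑ k, w k (i k)) 0) + max (-(Lf w)) 0 with hg
    have hgcont : Continuous g := by
      rw [hg]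
      exact Continuous.add (continuous_finset_sum _ fun i _ => (hcsum i).max continuous_const)
        ((hLcont.neg).max continuous_const)
    have hgpos : ∀ w, w ∈ W → ‖w‖ = 1 → 0 < g w := by
      intro w hwW hw1
      rcases lt_or_ge 0 (g w) with h | h
      · exact h
      · exfalso
        have hsum_nonneg : 0 ≤ ∑ i ∈ supp, max (∑ k, w k (i k)) 0 :=
          Finset.sum_nonneg fun i _ => le_max_right _ _
      -- both parts are zero
        have hpart2 : max (-(Lf w)) 0 ≤ 0 := by
          simp only [hg] at h; linarith
        have hLw : 0 ≤ Lf w := by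
          have := le_max_left (-(Lf w)) 0
          linarith
        have hsum0 : ∑ i ∈ supp, max (∑ k, w k (i k)) 0 = 0 := by
          have h2 : 0 ≤ max (-(Lf w)) 0 := le_max_right _ _
          simp only [hg] at h; linarith
        have hterm : ∀ i ∈ supp, max (∑ k, w k (i k)) 0 = 0 :=
          (Finset.sum_eq_zero_iff_of_nonneg (fun i _ => le_max_right _ _)).1 hsum0
        have hwle : ∀ i : (j : Fin d) → Fin (m j), 0 < B i → ∑ k, w k (i k) ≤ 0 := by
          intro i hBi
          have hi : i ∈ supp := Finset.mem_filter.2 ⟨Finset.mem_univ _, hBi⟩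
          have := hterm i hi
          calc ∑ k, w k (i k) ≤ max (∑ k, w k (i k)) 0 := le_max_left _ _
            _ = 0 := this
        have hwU : w ∈ U := hUmem w hwle hLw
        have : w = 0 := Submodule.disjoint_def.1 hUW.disjoint w hwU hwW
        rw [this, norm_zero] at hw1
        exact one_ne_zero hw1.symm
    -- norm bound for Lf
    set Cs : ℝ := ∑ k, ∑ j, s k j with hCs
    have hLbound : ∀ x : (k : Fin d) → Fin (m k) → ℝ, Lf x ≤ Cs * ‖x‖ := by
      intro x
      rw [hLf, hCs, Finset.sum_mul]
      refine Finset.sum_le_sum fun k _ => ?_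
      rw [Finset.sum_mul]
      refine Finset.sum_le_sum fun j _ => ?_
      refine mul_le_mul_of_nonneg_left ?_ (hs k j).le
      calc x k j ≤ |x k j| := le_abs_self _
        _ = ‖x k j‖ := (Real.norm_eq_abs _).symm
        _ ≤ ‖x k‖ := norm_le_pi_norm (x k) j
        _ ≤ ‖x‖ := norm_le_pi_norm x k
    set bmin : ℝ := supp.inf' hsupp_ne B with hbmin
    have hbpos : 0 < bmin := by
      rw [hbmin, Finset.lt_inf'_iff]
      exact fun i hi => (Finset.mem_filter.1 hi).2
    have hexp_nonneg : ∀ x : (k : Fin d) → Fin (m k) → ℝ,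
        0 ≤ ∑ i, B i * Real.exp (∑ k, x k (i k)) :=
      fun x => Finset.sum_nonneg fun i _ => mul_nonneg (hB i) (Real.exp_pos _).le
    -- coercivity on W
    have hcoer : ∃ R : ℝ, 0 < R ∧ ∀ x, x ∈ W → φ x ≤ φ 0 → ‖x‖ ≤ R := by
      by_cases hS : ∃ w, w ∈ W ∧ ‖w‖ = (1:ℝ)
      · set S : Set ((k : Fin d) → Fin (m k) → ℝ) := (W : Set _) ∩ Metric.sphere 0 1 with hSdef
        have hScl : IsClosed S := hWclosed.inter Metric.isClosed_sphere
        have hSsub : S ⊆ Metric.closedBall 0 1 := fun w hw => Metric.sphere_subset_closedBall hw.2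
        have hScompact : IsCompact S :=
          (isCompact_closedBall (0 : (k : Fin d) → Fin (m k) → ℝ) 1).of_isClosed_subset hScl hSsub
        obtain ⟨w₁, hw₁⟩ := hS
        have hSne : S.Nonempty :=
          ⟨w₁, hw₁.1, by rw [Metric.mem_sphere, dist_zero_right]; exact hw₁.2⟩
        obtain ⟨wm, hwmS, hwm⟩ := hScompact.exists_isMinOn hSne hgcont.continuousOn
        set ε : ℝ := g wm with hε
        have hεpos : 0 < ε := hgpos wm hwmS.1
          (by have := hwmS.2; rwa [Metric.mem_sphere, dist_zero_right] at this)
        set N : ℕ := supp.card with hN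
        set ε' : ℝ := ε / (N + 1) with hε'
        have hε'pos : 0 < ε' := div_pos hεpos (by positivity)
        have hNε : (N : ℝ) * ε' + ε' = ε := by
          rw [hε']
          field_simp
        have hφlower : ∀ x, x ∈ W → x ≠ 0 →
            (bmin * Real.exp (ε' * ‖x‖) - Cs * ‖x‖ ≤ φ x ∨ ε' * ‖x‖ ≤ φ x) := by
          intro x hxW hx0
          have hnorm : ‖x‖ ≠ 0 := norm_ne_zero_iff.2 hx0
          have hnormpos : 0 < ‖x‖ := norm_pos_iff.2 hx0
          set w : (k : Fin d) → Fin (m k) → ℝ := ‖x‖⁻¹ • x with hwdef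
          have hwS : w ∈ S := ⟨W.smul_mem _ hxW, by
            rw [Metric.mem_sphere, dist_zero_right, hwdef, norm_smul, norm_inv, norm_norm]
            exact inv_mul_cancel₀ hnorm⟩
          have hgw : ε ≤ g w := hwm hwS
          have hsumw : ∀ i : (j : Fin d) → Fin (m j),
              ∑ k, w k (i k) = ‖x‖⁻¹ * (∑ k, x k (i k)) := by
            intro i
            rw [hwdef]
            simp only [Pi.smul_apply, smul_eq_mul]
            rw [Finset.mul_sum]
          have hLww : Lf w = ‖x‖⁻¹ * Lf x := by
            rw [hwdef]
            simp only [hLf, Pi.smul_apply, smul_eq_mul]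
            rw [Finset.mul_sum]
            refine Finset.sum_congr rfl fun k _ => ?_
            rw [Finset.mul_sum]
            exact Finset.sum_congr rfl fun j _ => by ring
          have hbig : (∃ i ∈ supp, ε' ≤ ∑ k, w k (i k)) ∨ ε' ≤ -(Lf w) := by
            by_contra hcon
            push_neg at hcon
            obtain ⟨h1, h2⟩ := hcon
            have hsum_lt : ∑ i ∈ supp, max (∑ k, w k (i k)) 0 < (N : ℝ) * ε' := by
              have h3 : ∑ i ∈ supp, max (∑ k, w k (i k)) 0 < ∑ _i ∈ supp, ε' :=
                Finset.sum_lt_sum_of_nonempty hsupp_ne fun i hi =>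
                  max_lt (h1 i hi) hε'pos
              rwa [Finset.sum_const, nsmul_eq_mul, ← hN] at h3
            have h4 : max (-(Lf w)) 0 < ε' := max_lt h2 hε'pos
            have h5 : g w < ε := by
              simp only [hg]
              linarith
            linarith
          rcases hbig with ⟨i, hisupp, hiw⟩ | hLww2
          · left
            have hBi : 0 < B i := (Finset.mem_filter.1 hisupp).2
            have hcix : ε' * ‖x‖ ≤ ∑ k, x k (i k) := by
              rw [hsumw i, inv_mul_eq_div] at hiw
              exact (le_div_iff₀ hnormpos).1 hiw
            have hble : bmin ≤ B i := Finset.inf'_le B hisupp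
            have hmono : Real.exp (ε' * ‖x‖) ≤ Real.exp (∑ k, x k (i k)) :=
              Real.exp_le_exp.2 hcix
            have hsingle : B i * Real.exp (∑ k, x k (i k)) ≤
                ∑ i', B i' * Real.exp (∑ k, x k (i' k)) :=
              Finset.single_le_sum (f := fun i' => B i' * Real.exp (∑ k, x k (i' k)))
                (fun i' _ => mul_nonneg (hB i') (Real.exp_pos _).le) (Finset.mem_univ i)
            have hmul : bmin * Real.exp (ε' * ‖x‖) ≤ B i * Real.exp (∑ k, x k (i k)) :=
              mul_le_mul hble hmono (Real.exp_pos _).le (hB i)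
            have hLx := hLbound x
            simp only [hφ]
            linarith
          · right
            have hLxle : ε' * ‖x‖ ≤ -(Lf x) := by
              rw [hLww, ← mul_neg, inv_mul_eq_div] at hLww2
              exact (le_div_iff₀ hnormpos).1 hLww2
            have := hexp_nonneg x
            simp only [hφ]
            linarith
        obtain ⟨R, hR0, hRprop⟩ := aux_exists_R bmin ε' Cs (φ 0) hbpos hε'pos
        refine ⟨R, hR0, fun x hxW hφx => ?_⟩
        by_contra hRx
        push_neg at hRx
        have hx0 : x ≠ 0 := by
          intro h
          rw [h, norm_zero] at hRx
          linarith
        obtain ⟨h1, h2⟩ := hRprop ‖x‖ hRx.le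
        rcases hφlower x hxW hx0 with h | h <;> linarith
      · refine ⟨1, one_pos, fun x hx _ => ?_⟩
        by_contra hgt
        push_neg at hgt
        have hx0 : x ≠ 0 := by
          intro h
          rw [h, norm_zero] at hgt
          linarith
        exact hS ⟨‖x‖⁻¹ • x, W.smul_mem _ hx, by
          rw [norm_smul, norm_inv, norm_norm]
          exact inv_mul_cancel₀ (norm_ne_zero_iff.2 hx0)⟩
    -- existence of a minimizer
    obtain ⟨R, hR0, hcoer⟩ := hcoer
    set K : Set ((k : Fin d) → Fin (m k) → ℝ) := (W : Set _) ∩ φ ⁻¹' (Set.Iic (φ 0)) with hK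
    have hKcl : IsClosed K := hWclosed.inter (IsClosed.preimage hφcont isClosed_Iic)
    have hKsub : K ⊆ Metric.closedBall 0 R := fun x hx => by
      rw [Metric.mem_closedBall, dist_zero_right]
      exact hcoer x hx.1 hx.2
    have hKcomp : IsCompact K :=
      (isCompact_closedBall (0 : (k : Fin d) → Fin (m k) → ℝ) R).of_isClosed_subset hKcl hKsub
    have hK0 : (0 : (k : Fin d) → Fin (m k) → ℝ) ∈ K := ⟨W.zero_mem, by simp [Set.mem_preimage]⟩
    obtain ⟨xm, hxmK, hxmmin⟩ := hKcomp.exists_isMinOn ⟨0, hK0⟩ hφcont.continuousOn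
    have hminW : ∀ y ∈ W, φ xm ≤ φ y := by
      intro y hy
      by_cases h : φ y ≤ φ 0
      · exact isMinOn_iff.1 hxmmin y ⟨hy, h⟩
      · exact le_trans (isMinOn_iff.1 hxmmin 0 hK0) (le_of_not_ge h)
    have hminE : ∀ y, φ xm ≤ φ y := by
      intro y
      obtain ⟨u, w, hu, hw, huw⟩ := Submodule.codisjoint_iff_exists_add_eq.mp hUW.codisjoint y
      rw [← huw, add_comm u w, hinv u hu w]
      exact hminW w hw
    -- the scaled tensor
    refine ⟨fun i => Real.exp (∑ k, xm k (i k)) * B i,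
      fun i => mul_nonneg (Real.exp_pos _).le (hB i), ⟨xm, fun i => rfl⟩, ?_⟩
    intro k j
    set y : (k : Fin d) → Fin (m k) → ℝ := Pi.single k (Pi.single j 1) with hy
    have hcy : ∀ i : (j : Fin d) → Fin (m j),
        ∑ k', y k' (i k') = if i k = j then (1:ℝ) else 0 := by
      intro i
      rw [Finset.sum_eq_single k]
      · rw [hy, Pi.single_eq_same, Pi.single_apply]
      · intro k' _ hk'
        rw [hy, Pi.single_eq_of_ne hk']
        rfl
      · exact fun h => absurd (Finset.mem_univ k) h
    have hLy : Lf y = s k j := by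
      simp only [hLf]
      rw [Finset.sum_eq_single k]
      · rw [hy, Pi.single_eq_same]
        rw [Finset.sum_eq_single j]
        · rw [Pi.single_eq_same, mul_one]
        · intro j' _ hj'
          rw [Pi.single_eq_of_ne hj', mul_zero]
        · exact fun h => absurd (Finset.mem_univ j) h
      · intro k' _ hk'
        rw [hy, Pi.single_eq_of_ne hk']
        simp
      · exact fun h => absurd (Finset.mem_univ k) h
    have hfun : (fun t : ℝ => φ (xm + t • y)) =
        (fun t : ℝ => (∑ i, B i * Real.exp ((∑ k', xm k' (i k'))
          + t * (if i k = j then (1:ℝ) else 0))) - (Lf xm + t * s k j)) := by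
      funext t
      simp only [hφ]
      congr 1
      · refine Finset.sum_congr rfl fun i _ => ?_
        congr 1
        rw [← hcy i]
        simp only [Pi.add_apply, Pi.smul_apply, smul_eq_mul]
        rw [Finset.sum_add_distrib, Finset.mul_sum]
      · rw [← hLy]
        simp only [hLf, Pi.add_apply, Pi.smul_apply, smul_eq_mul, mul_add,
          Finset.sum_add_distrib]
        congr 1
        rw [Finset.mul_sum]
        refine Finset.sum_congr rfl fun k' _ => ?_
        rw [Finset.mul_sum]
        exact Finset.sum_congr rfl fun j' _ => by ring
    have hderiv : HasDerivAt
        (fun t : ℝ => (∑ i, B i * Real.exp ((∑ k', xm k' (i k'))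
          + t * (if i k = j then (1:ℝ) else 0))) - (Lf xm + t * s k j))
        ((∑ i, B i * Real.exp (∑ k', xm k' (i k')) * (if i k = j then (1:ℝ) else 0))
          - s k j) 0 :=
      aux_hasDerivAt B (fun i => ∑ k', xm k' (i k'))
        (fun i => if i k = j then (1:ℝ) else 0) (Lf xm) (s k j)
    rw [← hfun] at hderiv
    have hloc : IsLocalMin (fun t : ℝ => φ (xm + t • y)) 0 := by
      refine Filter.Eventually.of_forall fun t => ?_
      simp only [zero_smul, add_zero]
      exact hminE (xm + t • y)
    have h0 := hloc.hasDerivAt_eq_zero hderiv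
    have heq : ∑ i, B i * Real.exp (∑ k', xm k' (i k')) * (if i k = j then (1:ℝ) else 0)
        = s k j := sub_eq_zero.1 h0
    rw [Finset.sum_filter, ← heq]
    refine Finset.sum_congr rfl fun i _ => ?_
    by_cases h : i k = j
    · simp [h, mul_comm]
    · simp [h]
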